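/- arXiv:2205.00963 — 4 statements merged into one kernel-verified Lean document; each statement's English description precedes it below -/
import Mathlib

section
/- Let m be a positive integer. The map from {i ∈ ℤ/2mℤ arising from odd i ∈ {1,3,...,2m-1}} × (ℤ/2mℤ) to (ℤ/2mℤ)² sending (i,j) ↦ (i+j-1, (i-1)/2 + j) (where (i-1)/2 is the integer quotient before reduction mod 2m) is injective; in particular its image has exactly 2m² elements. -/
/-- For `m ≥ 1`, the map sending an odd `i ∈ {1,3,…,2m-1}` (written `i = 2a+1`) and
`j ∈ {1,…,2m}` to `(i+j-1 mod 2m, (i-1)/2 + j mod 2m)` is injective, so its image has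
exactly `2m²` elements. -/
theorem stmt2 (m : ℕ) (hm : 0 < m) :
    Function.Injective (fun p : Fin m × Fin (2 * m) =>
      ((((2 * (p.1 : ℕ) + 1) + ((p.2 : ℕ) + 1) - 1 : ℕ) : ZMod (2 * m)),
       ((((2 * (p.1 : ℕ) + 1) - 1) / 2 + ((p.2 : ℕ) + 1) : ℕ) : ZMod (2 * m)))) ∧
    (Finset.univ.image (fun p : Fin m × Fin (2 * m) =>
      ((((2 * (p.1 : ℕ) + 1) + ((p.2 : ℕ) + 1) - 1 : ℕ) : ZMod (2 * m)),
       ((((2 * (p.1 : ℕ) + 1) - 1) / 2 + ((p.2 : ℕ) + 1) : ℕ) : ZMod (2 * m))))).card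
      = 2 * m ^ 2 := by
  haveI : NeZero (2 * m) := ⟨by omega⟩
  have hinj : Function.Injective (fun p : Fin m × Fin (2 * m) =>
      ((((2 * (p.1 : ℕ) + 1) + ((p.2 : ℕ) + 1) - 1 : ℕ) : ZMod (2 * m)),
       ((((2 * (p.1 : ℕ) + 1) - 1) / 2 + ((p.2 : ℕ) + 1) : ℕ) : ZMod (2 * m)))) := by
    rintro ⟨a, j⟩ ⟨a', j'⟩ h
    simp only [Prod.mk.injEq] at h
    obtain ⟨h1, h2⟩ := h
    have e1 : 2 * (a : ℕ) + 1 + ((j : ℕ) + 1) - 1 = 2 * (a : ℕ) + (j : ℕ) + 1 := by omega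
    have e1' : 2 * (a' : ℕ) + 1 + ((j' : ℕ) + 1) - 1 = 2 * (a' : ℕ) + (j' : ℕ) + 1 := by omega
    have e2 : (2 * (a : ℕ) + 1 - 1) / 2 + ((j : ℕ) + 1) = (a : ℕ) + (j : ℕ) + 1 := by omega
    have e2' : (2 * (a' : ℕ) + 1 - 1) / 2 + ((j' : ℕ) + 1) = (a' : ℕ) + (j' : ℕ) + 1 := by omega
    rw [e1, e1'] at h1
    rw [e2, e2'] at h2
    -- subtract
    have ha : ((a : ℕ) : ZMod (2 * m)) = ((a' : ℕ) : ZMod (2 * m)) := by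
      have := congrArg (· - (((a' : ℕ) + (j' : ℕ) + 1 : ℕ) : ZMod (2 * m))) h1
      push_cast at h1 h2 ⊢
      linear_combination h1 - h2
    have haa : (a : ℕ) = (a' : ℕ) := by
      have := congrArg ZMod.val ha
      rwa [ZMod.val_natCast_of_lt (by omega), ZMod.val_natCast_of_lt (by omega)] at this
    have hj : ((j : ℕ) : ZMod (2 * m)) = ((j' : ℕ) : ZMod (2 * m)) := by
      push_cast at h2 ⊢
      rw [haa] at h2
      linear_combination h2
    have hjj : (j : ℕ) = (j' : ℕ) := by
      have := congrArg ZMod.val hj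
      rwa [ZMod.val_natCast_of_lt j.isLt, ZMod.val_natCast_of_lt j'.isLt] at this
    exact Prod.ext (Fin.ext haa) (Fin.ext hjj)
  refine ⟨hinj, ?_⟩
  rw [Finset.card_image_of_injective _ hinj]
  simp [Finset.card_univ]
  ring
end

section
/- Let I, J be homogeneous ideals of R = K[x1,...,xn] such that both R/I and R/J are Artinian Gorenstein graded algebras with socle degree d. If I_d = J_d (equality of degree-d graded components), then I = J. -/
open MvPolynomial

/-- `diffMon m f` is the result of applying the differential operator `∂^m` to `f`. -/
noncomputable def diffMon {K σ : Type*} [CommSemiring K] (m : σ →₀ ℕ)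
    (f : MvPolynomial σ K) : MvPolynomial σ K :=
  ∑ m' ∈ f.support,
    ((∏ i ∈ m.support, ((m' i).descFactorial (m i) : K)) * coeff m' f) •
      monomial (m' - m) (1 : K)

/-- `applyTo f g = g(∂₁,…,∂ₙ) f`, linear in `g`. -/
noncomputable def applyTo {K σ : Type*} [CommSemiring K] (f : MvPolynomial σ K) :
    MvPolynomial σ K →ₗ[K] MvPolynomial σ K :=
  Finsupp.lsum K (fun m => LinearMap.toSpanSingleton K (MvPolynomial σ K) (diffMon m f)) ∘ₗ
    (AddMonoidAlgebra.coeffLinearEquiv K).toLinearMap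

/-- The multidegree of an exponent vector `m` with respect to the coloring `c`. -/
def mdeg {σ : Type*} {d : ℕ} (c : σ → Fin d) (m : σ →₀ ℕ) (i : Fin d) : ℕ :=
  m.sum fun x k => if c x = i then k else 0

/-- The `ℤ^d`-graded component of the polynomial ring of multidegree `v`,
with respect to the coloring `c` of the variables. -/
noncomputable def componentSub (K : Type*) [CommSemiring K] {σ : Type*} {d : ℕ}
    (c : σ → Fin d) (v : Fin d → ℕ) : Submodule K (MvPolynomial σ K) :=
  Submodule.span K {p | ∃ m : σ →₀ ℕ, (∀ i, mdeg c m i = v i) ∧ p = monomial m (1 : K)}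

/-- `Hdim f S` is `H(f,S)`, the dimension of `{g(∂)f : g ∈ R_{e_S}}`. -/
noncomputable def Hdim {K : Type*} [Field K] {σ : Type*} {d : ℕ} (c : σ → Fin d)
    (f : MvPolynomial σ K) (S : Finset (Fin d)) : ℕ :=
  Module.finrank K ((componentSub K c (fun i => if i ∈ S then 1 else 0)).map (applyTo f))

/-- The degree-`t` graded component of `R/I` as a `K`-subspace. -/
noncomputable def quotComponent {K : Type*} [Field K] {n : ℕ}
    (I : Ideal (MvPolynomial (Fin n) K)) (t : ℕ) :
    Submodule K (MvPolynomial (Fin n) K ⧸ I) :=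
  (homogeneousSubmodule (Fin n) K t).map (Ideal.Quotient.mkₐ K I).toLinearMap

/-- `R/I` is an Artinian Gorenstein graded algebra of socle degree `d`: it is finite
dimensional, `(R/I)_d ≠ 0` is one-dimensional, and `0 :_{R/I} (x₁,…,xₙ) = (R/I)_d`. -/
def IsArtinianGorensteinSocle {K : Type*} [Field K] {n : ℕ}
    (I : Ideal (MvPolynomial (Fin n) K)) (d : ℕ) : Prop :=
  Module.Finite K (MvPolynomial (Fin n) K ⧸ I) ∧
  quotComponent I d ≠ ⊥ ∧
  Module.finrank K (quotComponent I d) = 1 ∧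
  ∀ a : MvPolynomial (Fin n) K ⧸ I,
    ((∀ i : Fin n, Ideal.Quotient.mk I (X i) * a = 0) ↔ a ∈ quotComponent I d)

/-- Socle step: if `g` is homogeneous of degree `t ≠ d` and all `Xᵢ * g ∈ J`, then `g ∈ J`. -/
lemma socle_step {K : Type*} [Field K] {n d : ℕ} {J : Ideal (MvPolynomial (Fin n) K)}
    (hJhom : ∀ g ∈ J, ∀ t : ℕ, homogeneousComponent t g ∈ J)
    (hJ : IsArtinianGorensteinSocle J d) {t : ℕ} (htd : t ≠ d)
    {g : MvPolynomial (Fin n) K} (hg : g.IsHomogeneous t)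
    (hx : ∀ i : Fin n, X i * g ∈ J) : g ∈ J := by
  have hsoc := (hJ.2.2.2 (Ideal.Quotient.mk J g)).mp ?_
  · obtain ⟨h, hh, hmk⟩ := Submodule.mem_map.mp hsoc
    have hgh : g - h ∈ J := by
      rw [← Ideal.Quotient.eq_zero_iff_mem, map_sub, sub_eq_zero]
      exact (hmk.symm : _)
    have := hJhom _ hgh t
    rwa [map_sub, homogeneousComponent_of_mem hh, if_neg htd,
      homogeneousComponent_of_mem ((mem_homogeneousSubmodule _ _).mpr hg), if_pos rfl,
      sub_zero] at this
  · intro i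
    rw [← map_mul, Ideal.Quotient.eq_zero_iff_mem]
    exact hx i

/-- Every homogeneous polynomial of sufficiently large degree lies in `J`. -/
lemma large_degree_mem {K : Type*} [Field K] {n d : ℕ} {J : Ideal (MvPolynomial (Fin n) K)}
    (hJhom : ∀ g ∈ J, ∀ t : ℕ, homogeneousComponent t g ∈ J)
    (hJ : IsArtinianGorensteinSocle J d) :
    ∃ T : ℕ, ∀ t : ℕ, T ≤ t → ∀ g : MvPolynomial (Fin n) K, g.IsHomogeneous t → g ∈ J := by
  classical
  have hfin : Module.Finite K (MvPolynomial (Fin n) K ⧸ J) := hJ.1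
  obtain ⟨s, hs⟩ := Module.finite_def.mp hfin
  set f : MvPolynomial (Fin n) K ⧸ J → MvPolynomial (Fin n) K :=
    Function.surjInv (Ideal.Quotient.mk_surjective (I := J)) with hf
  have hfspec : ∀ a, Ideal.Quotient.mk J (f a) = a :=
    Function.surjInv_eq (Ideal.Quotient.mk_surjective (I := J))
  refine ⟨(s.sup fun a => (f a).totalDegree) + 1, fun t ht g hg => ?_⟩
  set mkL := (Ideal.Quotient.mkₐ K J).toLinearMap with hmkL
  have hsub : (↑s : Set (MvPolynomial (Fin n) K ⧸ J)) ⊆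
      ↑(Submodule.map mkL (Submodule.span K (f '' ↑s))) := by
    intro a ha
    exact ⟨f a, Submodule.subset_span ⟨a, ha, rfl⟩, hfspec a⟩
  have hmem : Ideal.Quotient.mk J g ∈ Submodule.map mkL (Submodule.span K (f '' ↑s)) := by
    have : Ideal.Quotient.mk J g ∈ Submodule.span K (↑s) := hs ▸ Submodule.mem_top
    exact Submodule.span_le.mpr hsub this
  obtain ⟨p, hp, hpg⟩ := hmem
  have hcomp : homogeneousComponent t p = 0 := by
    refine Submodule.span_induction (p := fun q _ => homogeneousComponent t q = 0)
      ?_ (map_zero _) ?_ ?_ hp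
    · rintro q ⟨a, ha, rfl⟩
      have hle : (f a).totalDegree ≤ s.sup fun a => (f a).totalDegree := Finset.le_sup (f := fun a => (f a).totalDegree) ha
      exact homogeneousComponent_eq_zero _ _ (by omega)
    · intro x y _ _ hx hy; rw [map_add, hx, hy, add_zero]
    · intro c x _ hx; rw [map_smul, hx, smul_zero]
  have hgp : g - p ∈ J := by
    rw [← Ideal.Quotient.eq_zero_iff_mem, map_sub, sub_eq_zero]
    exact (hpg.symm : _)
  have := hJhom _ hgp t
  rwa [map_sub, hcomp, sub_zero,
    homogeneousComponent_of_mem ((mem_homogeneousSubmodule _ _).mpr hg), if_pos rfl] at this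

/-- The one-sided inclusion: only the Gorenstein property of the *target* is needed. -/
lemma incl_aux {K : Type*} [Field K] {n d : ℕ} {I J : Ideal (MvPolynomial (Fin n) K)}
    (hIhom : ∀ g ∈ I, ∀ t : ℕ, homogeneousComponent t g ∈ I)
    (hJhom : ∀ g ∈ J, ∀ t : ℕ, homogeneousComponent t g ∈ J)
    (hJ : IsArtinianGorensteinSocle J d)
    (hd : Submodule.restrictScalars K I ⊓ homogeneousSubmodule (Fin n) K d
        ≤ Submodule.restrictScalars K J ⊓ homogeneousSubmodule (Fin n) K d) :
    I ≤ J := by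
  obtain ⟨T, hT⟩ := large_degree_mem hJhom hJ
  -- all homogeneous polynomials of degree > d are in J
  have topJ : ∀ k t : ℕ, T ≤ t + k → d < t →
      ∀ g : MvPolynomial (Fin n) K, g.IsHomogeneous t → g ∈ J := by
    intro k
    induction k with
    | zero => intro t ht _ g hg; exact hT t (by omega) g hg
    | succ k ih =>
      intro t ht hdt g hg
      by_cases h : T ≤ t
      · exact hT t h g hg
      · refine socle_step hJhom hJ (by omega) hg fun i => ?_
        exact ih (t + 1) (by omega) (by omega) _ (show (X i * g).IsHomogeneous (t+1) by rw [mul_comm]; exact hg.mul (isHomogeneous_X K i))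
  -- main downward induction: degree-t elements of I are in J
  have main : ∀ k t : ℕ, d ≤ t + k →
      ∀ g : MvPolynomial (Fin n) K, g.IsHomogeneous t → g ∈ I → g ∈ J := by
    intro k
    induction k with
    | zero =>
      intro t ht g hg hgI
      rcases eq_or_lt_of_le (show d ≤ t by omega) with h | h
      · have : g ∈ Submodule.restrictScalars K J ⊓ homogeneousSubmodule (Fin n) K d :=
          hd ⟨hgI, (mem_homogeneousSubmodule _ _).mpr (h ▸ hg)⟩
        exact this.1
      · exact topJ T t (by omega) h g hg
    | succ k ih =>
      intro t ht g hg hgI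
      by_cases h : d ≤ t
      · rcases eq_or_lt_of_le h with h | h
        · have : g ∈ Submodule.restrictScalars K J ⊓ homogeneousSubmodule (Fin n) K d :=
            hd ⟨hgI, (mem_homogeneousSubmodule _ _).mpr (h ▸ hg)⟩
          exact this.1
        · exact topJ T t (by omega) h g hg
      · refine socle_step hJhom hJ (by omega) hg fun i => ?_
        exact ih (t + 1) (by omega) _ (show (X i * g).IsHomogeneous (t+1) by rw [mul_comm]; exact hg.mul (isHomogeneous_X K i)) (Ideal.mul_mem_left I _ hgI)
  intro g hg
  rw [← sum_homogeneousComponent g]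
  refine Ideal.sum_mem _ fun i _ => ?_
  exact main d i (by omega) _ (homogeneousComponent_isHomogeneous i g) (hIhom g hg i)

/-- If `I`, `J` are homogeneous ideals with `R/I` and `R/J` Artinian Gorenstein of socle
degree `d`, and `I_d = J_d`, then `I = J`. -/
theorem stmt10 (K : Type*) [Field K] (n d : ℕ)
    (I J : Ideal (MvPolynomial (Fin n) K))
    (hIhom : ∀ g ∈ I, ∀ t : ℕ, homogeneousComponent t g ∈ I)
    (hJhom : ∀ g ∈ J, ∀ t : ℕ, homogeneousComponent t g ∈ J)
    (hI : IsArtinianGorensteinSocle I d) (hJ : IsArtinianGorensteinSocle J d)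
    (hd : Submodule.restrictScalars K I ⊓ homogeneousSubmodule (Fin n) K d
        = Submodule.restrictScalars K J ⊓ homogeneousSubmodule (Fin n) K d) :
    I = J :=
  le_antisymm (incl_aux hIhom hJhom hJ hd.le) (incl_aux hJhom hIhom hI hd.ge)
end

section
/- Let f be a nonzero balanced polynomial of multidegree (1,...,1) in R = K[x_{ij}]. Then for any S ⊆ [d], H(f,S) = H(f,[d]∖S), where H(f,S) = dim_K {g(∂)f : g ∈ R_{e_S}}. -/
open MvPolynomial

namespace Stmt12Aux

open Matrix

section mdegLemmas

variable {σ : Type*} {d : ℕ} (c : σ → Fin d)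

lemma mdeg_eq_sum (m : σ →₀ ℕ) (i : Fin d) :
    mdeg c m i = ∑ x ∈ m.support, if c x = i then m x else 0 := rfl

lemma mdeg_zero (i : Fin d) : mdeg c 0 i = 0 := by simp [mdeg]

lemma mdeg_add (m₁ m₂ : σ →₀ ℕ) (i : Fin d) :
    mdeg c (m₁ + m₂) i = mdeg c m₁ i + mdeg c m₂ i := by
  classical
  unfold mdeg
  apply Finsupp.sum_add_index
  · intro x _; simp
  · intro x _ k₁ k₂; split <;> simp

lemma mdeg_single (x : σ) (k : ℕ) (i : Fin d) :
    mdeg c (Finsupp.single x k) i = if c x = i then k else 0 := by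
  classical
  unfold mdeg
  rw [Finsupp.sum_single_index]
  simp

lemma mdeg_finset_sum {α : Type*} (s : Finset α) (g : α → (σ →₀ ℕ)) (i : Fin d) :
    mdeg c (∑ a ∈ s, g a) i = ∑ a ∈ s, mdeg c (g a) i := by
  classical
  induction s using Finset.induction_on with
  | empty => simp [mdeg_zero]
  | insert _ _ h ih => rw [Finset.sum_insert h, Finset.sum_insert h, mdeg_add, ih]

end mdegLemmas

section basic

variable {K : Type*} [Field K] {d : ℕ} {n : Fin d → ℕ}

/-- abbreviation for the variable index type -/
abbrev σn (n : Fin d → ℕ) : Type _ := Σ i : Fin d, Fin (n i)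

/-- The exponent vector which is `1` on the variables `x_{i, u i}` for `i ∈ T`. -/
noncomputable def monOn (T : Finset (Fin d)) (u : ∀ i, Fin (n i)) : σn n →₀ ℕ :=
  ∑ i ∈ T, Finsupp.single (⟨i, u i⟩ : σn n) 1

lemma monOn_apply (T : Finset (Fin d)) (u : ∀ i, Fin (n i)) (x : σn n) :
    monOn T u x = if x.1 ∈ T ∧ u x.1 = x.2 then 1 else 0 := by
  classical
  obtain ⟨i, j⟩ := x
  rw [monOn, Finsupp.finset_sum_apply]
  have h1 : ∀ i' ∈ T, (Finsupp.single (⟨i', u i'⟩ : σn n) 1) ⟨i, j⟩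
      = if i' = i then (if u i = j then 1 else 0) else 0 := by
    intro i' _
    rw [Finsupp.single_apply]
    by_cases h : i' = i
    · subst h
      simp
    · simp [h]
  rw [Finset.sum_congr rfl h1, Finset.sum_ite_eq' T i (fun _ => if u i = j then 1 else 0)]
  split_ifs with h1 h2 h3 h4 <;> simp_all

lemma mdeg_monOn (T : Finset (Fin d)) (u : ∀ i, Fin (n i)) (i : Fin d) :
    mdeg Sigma.fst (monOn T u) i = if i ∈ T then 1 else 0 := by
  classical
  rw [monOn, mdeg_finset_sum]
  have h1 : ∀ i' ∈ T, mdeg Sigma.fst (Finsupp.single (⟨i', u i'⟩ : σn n) 1) i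
      = if i' = i then 1 else 0 := fun i' _ => by rw [mdeg_single]
  rw [Finset.sum_congr rfl h1, Finset.sum_ite_eq' T i (fun _ => 1)]

lemma monOn_congr {T : Finset (Fin d)} {u u' : ∀ i, Fin (n i)}
    (h : ∀ i ∈ T, u i = u' i) : monOn T u = monOn T u' :=
  Finset.sum_congr rfl fun i hi => by rw [h i hi]

/-- classification of exponent vectors of multidegree `e_T` -/
lemma exists_monOn (hn : ∀ i, 0 < n i) {T : Finset (Fin d)} {m : σn n →₀ ℕ}
    (hm : ∀ i, mdeg Sigma.fst m i = if i ∈ T then 1 else 0) :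
    ∃ u : ∀ i, Fin (n i), m = monOn T u := by
  classical
  have key : ∀ i : Fin d, ∃ u : Fin (n i), ∀ j : Fin (n i),
      m ⟨i, j⟩ = if i ∈ T ∧ u = j then 1 else 0 := by
    intro i
    by_cases hiT : i ∈ T
    · have hs : ∑ x ∈ m.support, (if x.1 = i then m x else 0) = 1 := by
        rw [← mdeg_eq_sum, hm i, if_pos hiT]
      -- find the unique variable of color i
      have hex : ∃ x ∈ m.support, (if x.1 = i then m x else 0) ≠ 0 := by
        by_contra hc
        push_neg at hc
        rw [Finset.sum_eq_zero hc] at hs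
        exact one_ne_zero hs.symm
      obtain ⟨x₀, hx₀s, hx₀⟩ := hex
      obtain ⟨i', j₀⟩ := x₀
      have hfst : i' = i := by by_contra h; simp [h] at hx₀
      subst hfst
      simp only [if_pos rfl] at hx₀
      refine ⟨j₀, fun j => ?_⟩
      have hle : m ⟨i', j₀⟩ ≤ 1 := by
        have h0 := Finset.single_le_sum
          (f := fun x : σn n => if x.1 = i' then m x else 0) (fun x _ => Nat.zero_le _) hx₀s
        rw [hs] at h0
        simpa using h0
      have hm1 : m ⟨i', j₀⟩ = 1 := le_antisymm hle (Nat.one_le_iff_ne_zero.mpr hx₀)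
      by_cases hj : j₀ = j
      · subst hj; simp [hiT, hm1]
      · rw [if_neg (by simp [hj])]
        by_contra hne
        have hjs : (⟨i', j⟩ : σn n) ∈ m.support := Finsupp.mem_support_iff.mpr hne
        have hpair : ({(⟨i', j₀⟩ : σn n), ⟨i', j⟩} : Finset (σn n)) ⊆ m.support := by
          intro x hx
          simp only [Finset.mem_insert, Finset.mem_singleton] at hx
          rcases hx with rfl | rfl
          · exact hx₀s
          · exact hjs
        have h2 : 2 ≤ ∑ x ∈ m.support, (if x.1 = i' then m x else 0) := by
          calc 2 = 1 + 1 := rfl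
          _ ≤ m ⟨i', j₀⟩ + m ⟨i', j⟩ :=
            Nat.add_le_add (hm1.ge) (Nat.one_le_iff_ne_zero.mpr hne)
          _ = ∑ x ∈ ({(⟨i', j₀⟩ : σn n), ⟨i', j⟩} : Finset (σn n)),
                (if x.1 = i' then m x else 0) := by
            rw [Finset.sum_pair (by simp [hj])]
            simp
          _ ≤ _ := Finset.sum_le_sum_of_subset_of_nonneg hpair
                (fun x _ _ => Nat.zero_le _)
        rw [hs] at h2
        omega
    · refine ⟨⟨0, hn i⟩, fun j => ?_⟩
      rw [if_neg (by simp [hiT])]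
      have hs : ∑ x ∈ m.support, (if x.1 = i then m x else 0) = 0 := by
        rw [← mdeg_eq_sum, hm i, if_neg hiT]
      by_contra hne
      have hjs : (⟨i, j⟩ : σn n) ∈ m.support := Finsupp.mem_support_iff.mpr hne
      have := (Finset.sum_eq_zero_iff.mp hs) ⟨i, j⟩ hjs
      simp at this
      exact hne this
  choose u hu using key
  refine ⟨u, ?_⟩
  ext x
  obtain ⟨i, j⟩ := x
  rw [monOn_apply, hu i j]

lemma monOn_univ_inj {u u' : ∀ i, Fin (n i)}
    (h : monOn Finset.univ u = monOn Finset.univ u') : u = u' := by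
  funext i
  have := congrArg (fun m => m (⟨i, u i⟩ : σn n)) h
  simp only [monOn_apply] at this
  simp only [Finset.mem_univ, true_and] at this
  by_contra hne
  rw [if_neg (fun h' : u' i = u i => hne h'.symm)] at this
  simp at this

lemma monOn_split (T : Finset (Fin d)) (u : ∀ i, Fin (n i)) :
    monOn Finset.univ u = monOn T u + monOn Tᶜ u := by
  rw [monOn, monOn, monOn, Finset.sum_add_sum_compl]

lemma monOn_sub (T : Finset (Fin d)) (u : ∀ i, Fin (n i)) :
    monOn Finset.univ u - monOn T u = monOn Tᶜ u := by
  rw [monOn_split T u]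
  ext x
  simp only [Finsupp.tsub_apply, Finsupp.add_apply]
  omega

end basic

section glue

variable {K : Type*} [Field K] {d : ℕ} {n : Fin d → ℕ}

/-- type of partial tuples on `T` -/
abbrev tup (n : Fin d → ℕ) (T : Finset (Fin d)) : Type _ := ∀ i : {x // x ∈ T}, Fin (n i.1)

noncomputable instance (T : Finset (Fin d)) : Fintype (tup n T) :=
  by unfold tup; infer_instance

instance (T : Finset (Fin d)) : DecidableEq (tup n T) := by unfold tup; infer_instance

/-- extend a partial tuple by zeros -/
def emb (hn : ∀ i, 0 < n i) (T : Finset (Fin d)) (a : tup n T) :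
    ∀ i, Fin (n i) := fun i => if h : i ∈ T then a ⟨i, h⟩ else ⟨0, hn i⟩

/-- restrict a full tuple -/
def res (T : Finset (Fin d)) (u : ∀ i, Fin (n i)) : ∀ i : T, Fin (n i.1) := fun i => u i.1

/-- glue tuples on `S` and `Sᶜ` -/
def glue (S : Finset (Fin d)) (a : tup n S) (b : tup n Sᶜ) :
    ∀ i, Fin (n i) :=
  fun i => if h : i ∈ S then a ⟨i, h⟩ else b ⟨i, Finset.mem_compl.mpr h⟩

lemma emb_apply_mem (hn : ∀ i, 0 < n i) {T : Finset (Fin d)} (a : tup n T)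
    (i : T) : emb hn T a i.1 = a i := by
  rw [emb, dif_pos i.2]

lemma res_glue_left (S : Finset (Fin d)) (a : tup n S) (b : tup n Sᶜ) :
    res S (glue S a b) = a := by
  funext i
  rw [res, glue, dif_pos i.2]

lemma res_glue_right (S : Finset (Fin d)) (a : tup n S) (b : tup n Sᶜ) :
    res Sᶜ (glue S a b) = b := by
  funext i
  have h : i.1 ∉ S := Finset.mem_compl.mp i.2
  rw [res, glue, dif_neg h]

lemma glue_res (S : Finset (Fin d)) (u : ∀ i, Fin (n i)) :
    glue S (res S u) (res Sᶜ u) = u := by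
  funext i
  by_cases h : i ∈ S
  · rw [glue, dif_pos h]; rfl
  · rw [glue, dif_neg h]; rfl

/-- canonical exponent vector for a partial tuple -/
noncomputable def mexp (hn : ∀ i, 0 < n i) (T : Finset (Fin d)) (a : tup n T) :
    σn n →₀ ℕ := monOn T (emb hn T a)

lemma monOn_eq_mexp (hn : ∀ i, 0 < n i) (T : Finset (Fin d)) (u : ∀ i, Fin (n i)) :
    monOn T u = mexp hn T (res T u) := by
  refine monOn_congr fun i hi => ?_
  rw [emb, dif_pos hi]
  rfl

lemma mexp_inj (hn : ∀ i, 0 < n i) (T : Finset (Fin d)) {a a' : tup n T}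
    (h : mexp hn T a = mexp hn T a') : a = a' := by
  funext i
  have h1 := congrArg (fun m => m (⟨i.1, a i⟩ : σn n)) h
  simp only [mexp, monOn_apply] at h1
  rw [if_pos ⟨i.2, by rw [emb_apply_mem]⟩] at h1
  by_cases h2 : emb hn T a' i.1 = a i
  · rw [← emb_apply_mem hn a' i, h2]
  · rw [if_neg (fun hc => h2 hc.2)] at h1
    simp at h1

lemma support_subset_of_mem_component {σ : Type*} {dd : ℕ} {c : σ → Fin dd} {v : Fin dd → ℕ}
    {f : MvPolynomial σ K} (hf : f ∈ componentSub K c v) :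
    ∀ m ∈ f.support, ∀ i, mdeg c m i = v i := by
  classical
  let P : Submodule K (MvPolynomial σ K) :=
    { carrier := {p | ∀ m ∈ p.support, ∀ i, mdeg c m i = v i}
      add_mem' := by
        intro p q hp hq m hm i
        rcases Finset.mem_union.mp (MvPolynomial.support_add hm) with h | h
        · exact hp m h i
        · exact hq m h i
      zero_mem' := by
        intro m hm i
        simp at hm
      smul_mem' := by
        intro r p hp m hm i
        exact hp m (MvPolynomial.support_smul hm) i }
  have hle : componentSub K c v ≤ P := by
    rw [componentSub, Submodule.span_le]
    rintro p ⟨m, hm, rfl⟩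
    intro m' hm' i
    rw [MvPolynomial.support_monomial, if_neg (one_ne_zero (α := K))] at hm'
    rw [Finset.mem_singleton.mp hm']
    exact hm i
  exact hle hf

lemma applyTo_monomial {σ : Type*} [DecidableEq σ] (f : MvPolynomial σ K) (m : σ →₀ ℕ) :
    applyTo f (monomial m (1 : K)) = diffMon m f := by
  rw [← single_eq_monomial]
  rw [applyTo]
  rw [LinearMap.comp_apply]
  erw [Finsupp.lsum_single]
  simp [LinearMap.toSpanSingleton_apply]

/-- the image of the `e_S`-component under `applyTo f` -/
lemma map_component (hn : ∀ i, 0 < n i) (f : MvPolynomial (σn n) K) (S : Finset (Fin d)) :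
    (componentSub K Sigma.fst (fun i => if i ∈ S then 1 else 0)).map (applyTo f)
      = Submodule.span K
          (Set.range fun a : tup n S => diffMon (mexp hn S a) f) := by
  classical
  rw [componentSub, Submodule.map_span]
  congr 1
  ext p
  constructor
  · rintro ⟨q, ⟨m, hm, rfl⟩, rfl⟩
    obtain ⟨u, rfl⟩ := exists_monOn hn hm
    refine ⟨res S u, ?_⟩
    rw [applyTo_monomial, monOn_eq_mexp hn]
  · rintro ⟨a, rfl⟩
    refine ⟨monomial (mexp hn S a) 1, ⟨mexp hn S a, fun i => ?_, rfl⟩, applyTo_monomial f _⟩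
    rw [mexp, mdeg_monOn]

/-- the flattening matrix of `f` along `S` -/
noncomputable def mat (f : MvPolynomial (σn n) K) (S : Finset (Fin d)) :
    Matrix (tup n S) (tup n Sᶜ) K :=
  fun a b => coeff (monOn Finset.univ (glue S a b)) f

lemma glue_eq_of_res (S : Finset (Fin d)) (u : ∀ i, Fin (n i)) (a : tup n S)
    (h : res S u = a) : glue S a (res Sᶜ u) = u := by
  rw [← h, glue_res]

lemma mem_support_mexp (hn : ∀ i, 0 < n i) (S : Finset (Fin d)) (a : tup n S) (x : σn n) :
    x ∈ (mexp hn S a).support ↔ (x.1 ∈ S ∧ emb hn S a x.1 = x.2) := by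
  rw [Finsupp.mem_support_iff, mexp, monOn_apply]
  split_ifs with h
  · simpa using h
  · simpa using h

lemma diffMon_mexp (hn : ∀ i, 0 < n i) {f : MvPolynomial (σn n) K}
    (hs : ∀ m ∈ f.support, ∀ i, mdeg Sigma.fst m i = 1)
    (S : Finset (Fin d)) (a : tup n S) :
    diffMon (mexp hn S a) f
      = ∑ b : tup n Sᶜ, mat f S a b • monomial (mexp hn Sᶜ b) (1 : K) := by
  classical
  have hsub : f.support ⊆
      Finset.image (fun u : ∀ i, Fin (n i) => monOn Finset.univ u) Finset.univ := by
    intro m hm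
    obtain ⟨u, rfl⟩ := exists_monOn hn (T := Finset.univ) (fun i => by simpa using hs m hm i)
    exact Finset.mem_image_of_mem _ (Finset.mem_univ u)
  rw [diffMon, Finset.sum_subset hsub (fun m _ hnm => by
    rw [MvPolynomial.notMem_support_iff.mp hnm]; simp)]
  rw [Finset.sum_image (fun u _ u' _ h => monOn_univ_inj h)]
  have hterm : ∀ u : ∀ i, Fin (n i),
      ((∏ x ∈ (mexp hn S a).support,
          (((monOn Finset.univ u) x).descFactorial ((mexp hn S a) x) : K))
        * coeff (monOn Finset.univ u) f) • monomial (monOn Finset.univ u - mexp hn S a) (1:K)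
      = if res S u = a then
          mat f S a (res Sᶜ u) • monomial (mexp hn Sᶜ (res Sᶜ u)) (1:K) else 0 := by
    intro u
    by_cases h : res S u = a
    · rw [if_pos h]
      have hD : (∏ x ∈ (mexp hn S a).support,
          (((monOn Finset.univ u) x).descFactorial ((mexp hn S a) x) : K)) = 1 := by
        apply Finset.prod_eq_one
        intro x hx
        obtain ⟨hx1, hx2⟩ := (mem_support_mexp hn S a x).mp hx
        have e1 : (mexp hn S a) x = 1 := by rw [mexp, monOn_apply, if_pos ⟨hx1, hx2⟩]
        have hx3 : u x.1 = x.2 := by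
          have h3 : u x.1 = a ⟨x.1, hx1⟩ := by rw [← h]; rfl
          rw [h3, ← (emb_apply_mem hn a ⟨x.1, hx1⟩), hx2]
        have e2 : (monOn Finset.univ u) x = 1 := by
          rw [monOn_apply, if_pos ⟨Finset.mem_univ _, hx3⟩]
        rw [e1, e2]
        norm_num
      have hmono : monOn Finset.univ u - mexp hn S a = mexp hn Sᶜ (res Sᶜ u) := by
        have e3 : mexp hn S a = monOn S u := by rw [monOn_eq_mexp hn S u, h]
        rw [e3, monOn_sub S u, monOn_eq_mexp hn]
      have hcoeff : mat f S a (res Sᶜ u) = coeff (monOn Finset.univ u) f := by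
        rw [mat, glue_eq_of_res S u a h]
      rw [hD, hmono, hcoeff, one_mul]
    · rw [if_neg h]
      have hD : (∏ x ∈ (mexp hn S a).support,
          (((monOn Finset.univ u) x).descFactorial ((mexp hn S a) x) : K)) = 0 := by
        have hex : ∃ i : {x // x ∈ S}, u i.1 ≠ a i := by
          by_contra hc
          push_neg at hc
          exact h (funext fun i => hc i)
        obtain ⟨i, hi⟩ := hex
        refine Finset.prod_eq_zero
          ((mem_support_mexp hn S a ⟨i.1, a i⟩).mpr ⟨i.2, emb_apply_mem hn a i⟩) ?_
        have e1 : (mexp hn S a) ⟨i.1, a i⟩ = 1 := by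
          rw [mexp, monOn_apply, if_pos ⟨i.2, emb_apply_mem hn a i⟩]
        have e2 : (monOn Finset.univ u) ⟨i.1, a i⟩ = 0 := by
          rw [monOn_apply, if_neg (fun hc => hi hc.2)]
        rw [e1, e2]
        norm_num
      rw [hD, zero_mul, zero_smul]
  rw [Finset.sum_congr rfl (fun u _ => hterm u)]
  have hbij : Function.Bijective (fun p : tup n S × tup n Sᶜ => glue S p.1 p.2) := by
    constructor
    · intro p p' h
      have h1 := congrArg (res S) h
      rw [res_glue_left, res_glue_left] at h1
      have h2 := congrArg (res Sᶜ) h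
      rw [res_glue_right, res_glue_right] at h2
      exact Prod.ext h1 h2
    · intro u
      exact ⟨(res S u, res Sᶜ u), glue_res S u⟩
  have hsum := Fintype.sum_bijective (fun p : tup n S × tup n Sᶜ => glue S p.1 p.2) hbij
    (fun p => if p.1 = a then mat f S a p.2 • monomial (mexp hn Sᶜ p.2) (1:K) else 0)
    (fun u => if res S u = a then
      mat f S a (res Sᶜ u) • monomial (mexp hn Sᶜ (res Sᶜ u)) (1:K) else 0)
    (fun p => by simp only [res_glue_left, res_glue_right])
  rw [← hsum, Fintype.sum_prod_type]
  rw [Fintype.sum_eq_single a (fun a' ha' => by simp [ha'])]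
  simp

/-- the canonical equivalence `tup n Sᶜᶜ ≃ tup n S` -/
def flipc (S : Finset (Fin d)) : tup n Sᶜᶜ ≃ tup n S where
  toFun a i := a ⟨i.1, by simpa using i.2⟩
  invFun a i := a ⟨i.1, by simpa using i.2⟩
  left_inv a := funext fun i => rfl
  right_inv a := funext fun i => rfl

lemma mat_compl (f : MvPolynomial (σn n) K) (S : Finset (Fin d)) :
    mat f Sᶜ = ((mat f S)ᵀ.submatrix id (flipc S)) := by
  ext b a'
  show coeff (monOn Finset.univ (glue Sᶜ b a')) f
    = coeff (monOn Finset.univ (glue S (flipc S a') b)) f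
  congr 1
  apply monOn_congr
  intro i _
  rw [glue, glue]
  by_cases h : i ∈ S
  · rw [dif_pos h, dif_neg (by simp [h] : i ∉ Sᶜ)]
    rfl
  · rw [dif_neg h, dif_pos (Finset.mem_compl.mpr h)]

end glue

section rank

variable {K : Type*} [Field K]

lemma finrank_span_eq_rank {ι ζ : Type*} [Fintype ι] [Fintype ζ]
    {V : Type*} [AddCommGroup V] [Module K V]
    (w : ζ → V) (hw : LinearIndependent K w) (M : Matrix ι ζ K) :
    Module.finrank K (Submodule.span K (Set.range fun a : ι => ∑ b, M a b • w b))
      = M.rank := by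
  classical
  let L : (ζ → K) →ₗ[K] V :=
    (Finsupp.linearCombination K w).comp
      (Finsupp.linearEquivFunOnFinite K K ζ).symm.toLinearMap
  have hL : ∀ g : ζ → K, L g = ∑ b, g b • w b := by
    intro g
    simp only [L, LinearMap.comp_apply, LinearEquiv.coe_coe]
    rw [Finsupp.linearCombination_apply, Finsupp.sum_fintype]
    · simp [Finsupp.linearEquivFunOnFinite]
    · intro b; simp
  have hinj : Function.Injective L := by
    rw [← LinearMap.ker_eq_bot, LinearMap.ker_eq_bot']
    intro g hg
    funext b
    exact Fintype.linearIndependent_iff.mp hw g (by rw [← hL]; exact hg) b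
  have hfun : (fun a : ι => ∑ b, M a b • w b) = fun a => L (M a) :=
    funext fun a => (hL (M a)).symm
  rw [hfun]
  have hrange : Set.range (fun a : ι => L (M a)) = L '' Set.range M.row := by
    rw [← Set.range_comp]
    rfl
  rw [hrange, Submodule.span_image]
  rw [← LinearEquiv.finrank_eq
    (Submodule.equivMapOfInjective L hinj (Submodule.span K (Set.range M.row)))]
  exact (Matrix.rank_eq_finrank_span_row M).symm

lemma rank_submatrix_col {ι ζ ζ' : Type*} [Fintype ι] [Fintype ζ] [Fintype ζ']
    (A : Matrix ι ζ K) (e : ζ' ≃ ζ) : (A.submatrix id e).rank = A.rank := by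
  rw [Matrix.rank_eq_finrank_span_row, Matrix.rank_eq_finrank_span_row]
  let L : (ζ → K) →ₗ[K] (ζ' → K) := (LinearEquiv.funCongrLeft K K e).toLinearMap
  have hinj : Function.Injective L := (LinearEquiv.funCongrLeft K K e).injective
  have hr : Set.range (A.submatrix id e).row = L '' Set.range A.row := by
    rw [← Set.range_comp]
    rfl
  rw [hr, Submodule.span_image]
  exact (LinearEquiv.finrank_eq
    (Submodule.equivMapOfInjective L hinj (Submodule.span K (Set.range A.row)))).symm

end rank

end Stmt12Aux

/-- For a nonzero balanced polynomial `f` of multidegree `(1,…,1)`,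
`H(f,S) = H(f,[d]∖S)`. -/
theorem stmt12 (K : Type*) [Field K] (d : ℕ) (n : Fin d → ℕ)
    (f : MvPolynomial (Σ i : Fin d, Fin (n i)) K) (hf0 : f ≠ 0)
    (hf : f ∈ componentSub K (Sigma.fst : (Σ i : Fin d, Fin (n i)) → Fin d) (fun _ => 1))
    (S : Finset (Fin d)) :
    Hdim Sigma.fst f S = Hdim Sigma.fst f Sᶜ := by
  classical
  open Stmt12Aux in
  have hsupp : ∀ m ∈ f.support, ∀ i, mdeg Sigma.fst m i = 1 :=
    fun m hm i => support_subset_of_mem_component hf m hm i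
  have hn : ∀ i, 0 < n i := by
    intro i
    have h0 : f.support.Nonempty := by
      rw [Finset.nonempty_iff_ne_empty]
      intro hc
      exact hf0 (MvPolynomial.support_eq_empty.mp hc)
    obtain ⟨m, hm⟩ := h0
    have h1 : mdeg Sigma.fst m i = 1 := hsupp m hm i
    have hex : ∃ x ∈ m.support, (if x.1 = i then m x else 0) ≠ 0 := by
      by_contra hc
      push_neg at hc
      rw [mdeg_eq_sum, Finset.sum_eq_zero hc] at h1
      exact one_ne_zero h1.symm
    obtain ⟨⟨i', j⟩, _, hx⟩ := hex
    have hii : i' = i := by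
      by_contra hne
      simp [hne] at hx
    subst hii
    exact j.pos
  have key : ∀ T : Finset (Fin d), Hdim Sigma.fst f T = (Stmt12Aux.mat f T).rank := by
    intro T
    rw [Hdim, Stmt12Aux.map_component hn f T]
    have h2 : Function.Injective (Stmt12Aux.mexp hn Tᶜ) :=
      fun a a' h => Stmt12Aux.mexp_inj hn Tᶜ h
    have hw : LinearIndependent K
        (fun b : Stmt12Aux.tup n Tᶜ => monomial (Stmt12Aux.mexp hn Tᶜ b) (1:K)) := by
      have h1 :=
        (MvPolynomial.basisMonomials (Stmt12Aux.σn n) K).linearIndependent.comp _ h2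
      rwa [MvPolynomial.coe_basisMonomials] at h1
    have hfun : (fun a : Stmt12Aux.tup n T => diffMon (Stmt12Aux.mexp hn T a) f)
        = fun a => ∑ b, Stmt12Aux.mat f T a b •
            (fun b : Stmt12Aux.tup n Tᶜ => monomial (Stmt12Aux.mexp hn Tᶜ b) (1:K)) b :=
      funext fun a => Stmt12Aux.diffMon_mexp hn hsupp T a
    rw [hfun]
    exact Stmt12Aux.finrank_span_eq_rank _ hw (Stmt12Aux.mat f T)
  rw [key S, key Sᶜ, Stmt12Aux.mat_compl f S, Stmt12Aux.rank_submatrix_col,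
    Matrix.rank_transpose]
end

section
/- Let d = 2m be even and f a balanced neighborly polynomial of type (n_1,...,n_d) with n_1 ≥ n_2 ≥ ... ≥ n_d. Then n_1 = n_2 = ... = n_d. -/
open MvPolynomial

section Aux
variable {K : Type*} [Field K] {σ : Type*} {d : ℕ} (c : σ → Fin d)

lemma mdeg_add (a b : σ →₀ ℕ) (i : Fin d) :
    mdeg c (a + b) i = mdeg c a i + mdeg c b i := by
  unfold mdeg
  rw [Finsupp.sum_add_index']
  · intro x; simp
  · intro x b1 b2; split <;> simp

lemma mem_component_support {v : Fin d → ℕ} {f : MvPolynomial σ K}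
    (hf : f ∈ componentSub K c v) : ∀ m' ∈ f.support, ∀ i, mdeg c m' i = v i := by
  classical
  refine Submodule.span_induction ?_ ?_ ?_ ?_ hf
  · rintro p ⟨mm, hmm, rfl⟩ m' hm' i
    rw [support_monomial, if_neg one_ne_zero, Finset.mem_singleton] at hm'
    subst hm'; exact hmm i
  · intro m' hm'; simp at hm'
  · intro p q _ _ hp hq m' hm' i
    rcases Finset.mem_union.1 (Finsupp.support_add hm') with h | h
    · exact hp m' h i
    · exact hq m' h i
  · intro a p _ hp m' hm' i
    exact hp m' (Finsupp.support_smul hm') i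

lemma diffMon_mem {e v : Fin d → ℕ} {f : MvPolynomial σ K} (hf : f ∈ componentSub K c e)
    {mm : σ →₀ ℕ} (hm : ∀ i, mdeg c mm i = v i) :
    diffMon mm f ∈ componentSub K c (fun i => e i - v i) := by
  unfold diffMon
  apply Submodule.sum_mem
  intro m' hm'
  by_cases h : (∏ i ∈ mm.support, ((m' i).descFactorial (mm i) : K)) * coeff m' f = 0
  · rw [h, zero_smul]; exact Submodule.zero_mem _
  · apply Submodule.smul_mem
    apply Submodule.subset_span
    refine ⟨m' - mm, ?_, rfl⟩
    have hle : mm ≤ m' := by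
      rw [Finsupp.le_def]
      intro x
      by_cases hx : x ∈ mm.support
      · by_contra hlt
        push_neg at hlt
        have h0 : ((m' x).descFactorial (mm x) : K) = 0 := by
          rw [Nat.descFactorial_eq_zero_iff_lt.2 hlt]; simp
        exact h (by rw [Finset.prod_eq_zero hx h0, zero_mul])
      · simp [Finsupp.notMem_support_iff.1 hx]
    intro i
    show mdeg c (m' - mm) i = e i - v i
    have h1 := mdeg_add c (m' - mm) mm i
    rw [tsub_add_cancel_of_le hle] at h1
    have h2 := mem_component_support c hf m' hm' i
    have h3 := hm i
    omega

lemma applyTo_monomial (f : MvPolynomial σ K) (mm : σ →₀ ℕ) :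
    applyTo f (monomial mm (1:K)) = diffMon mm f := by
  have : applyTo f (monomial mm (1:K)) =
      LinearMap.toSpanSingleton K (MvPolynomial σ K) (diffMon mm f) 1 :=
    sum_monomial_eq (map_zero _)
  rw [this, LinearMap.toSpanSingleton_apply, one_smul]

lemma comp_map_le {e v : Fin d → ℕ} {f : MvPolynomial σ K} (hf : f ∈ componentSub K c e) :
    (componentSub K c v).map (applyTo f) ≤ componentSub K c (fun i => e i - v i) := by
  rw [componentSub, Submodule.map_span, Submodule.span_le]
  rintro _ ⟨_, ⟨mm, hmm, rfl⟩, rfl⟩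
  exact SetLike.mem_coe.2 (by rw [applyTo_monomial]; exact diffMon_mem c hf hmm)

end Aux

section B

variable {K : Type*} [Field K] {d : ℕ} {n : Fin d → ℕ}

lemma sigma_eq (x : Σ j, Fin (n j)) (i : Fin d) (h : x.1 = i) :
    (⟨i, Fin.cast (congrArg n h) x.2⟩ : Σ j, Fin (n j)) = x := by
  cases x with
  | mk a b => subst h; rfl

lemma exists_of_mdeg_one {σ : Type*} (c : σ → Fin d) {mm : σ →₀ ℕ} {i : Fin d}
    (h : mdeg c mm i = 1) :
    ∃ x, c x = i ∧ mm x = 1 ∧ ∀ y, c y = i → y ≠ x → mm y = 0 := by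
  classical
  have h' : ∑ x ∈ mm.support, (if c x = i then mm x else 0) = 1 := h
  obtain ⟨x, hxs, hx⟩ := Finset.exists_ne_zero_of_sum_ne_zero (s := mm.support)
    (f := fun x => if c x = i then mm x else 0) (by rw [h']; norm_num)
  have hcx : c x = i := by by_contra hc; simp [hc] at hx
  refine ⟨x, hcx, ?_, ?_⟩
  · have hle : mm x ≤ 1 := by
      calc mm x = (if c x = i then mm x else 0) := by rw [if_pos hcx]
      _ ≤ ∑ x ∈ mm.support, (if c x = i then mm x else 0) :=
        Finset.single_le_sum (f := fun x => if c x = i then mm x else 0)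
          (fun _ _ => Nat.zero_le _) hxs
      _ = 1 := h'
    rw [if_pos hcx] at hx
    omega
  · intro y hcy hyx
    by_contra hy
    have hys : y ∈ mm.support := Finsupp.mem_support_iff.2 hy
    have hb : ∑ z ∈ ({x, y} : Finset σ), (if c z = i then mm z else 0) ≤ 1 := by
      rw [← h']
      refine Finset.sum_le_sum_of_subset ?_
      intro z hz
      rcases Finset.mem_insert.1 hz with rfl | hz
      · exact hxs
      · rw [Finset.mem_singleton.1 hz]; exact hys
    rw [Finset.sum_pair (Ne.symm hyx), if_pos hcx, if_pos hcy] at hb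
    rw [if_pos hcx] at hx
    omega

lemma mdeg_zero_eq {σ : Type*} (c : σ → Fin d) {mm : σ →₀ ℕ} {i : Fin d}
    (h : mdeg c mm i = 0) : ∀ y, c y = i → mm y = 0 := by
  intro y hcy
  by_contra hy
  have hys : y ∈ mm.support := Finsupp.mem_support_iff.2 hy
  have h' : ∑ x ∈ mm.support, (if c x = i then mm x else 0) = 0 := h
  rw [Finset.sum_eq_zero_iff] at h'
  have := h' y hys
  rw [if_pos hcy] at this
  omega
end B

section C
variable {K : Type*} [Field K] {d : ℕ} {n : Fin d → ℕ}

noncomputable def Fmap (K : Type*) [Field K] {d : ℕ} (n : Fin d → ℕ) (S : Finset (Fin d))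
    (t : ∀ i : {x // x ∈ S}, Fin (n i)) : MvPolynomial (Σ i, Fin (n i)) K :=
  monomial (∑ i ∈ S.attach, Finsupp.single (⟨i.1, t i⟩ : Σ j, Fin (n j)) 1) 1

lemma component_le_span (S : Finset (Fin d)) :
    componentSub K (Sigma.fst : (Σ i, Fin (n i)) → Fin d) (fun i => if i ∈ S then 1 else 0) ≤
      Submodule.span K (Set.range (Fmap K n S)) := by
  classical
  rw [componentSub, Submodule.span_le]
  rintro _ ⟨mm, hmm, rfl⟩
  apply Submodule.subset_span
  have hS : ∀ i : {x // x ∈ S}, ∃ x : Σ j, Fin (n j), x.1 = i.1 ∧ mm x = 1 ∧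
      ∀ y : Σ j, Fin (n j), y.1 = i.1 → y ≠ x → mm y = 0 := by
    intro i
    have h := hmm i.1
    rw [if_pos i.2] at h
    exact exists_of_mdeg_one _ h
  choose x hx1 hx2 hx3 using hS
  have hxe : ∀ i : {z // z ∈ S},
      (⟨i.1, Fin.cast (congrArg n (hx1 i)) (x i).2⟩ : Σ j, Fin (n j)) = x i :=
    fun i => sigma_eq _ _ (hx1 i)
  refine ⟨fun i => Fin.cast (congrArg n (hx1 i)) (x i).2, ?_⟩
  unfold Fmap
  have hsum : (∑ i ∈ S.attach,
      Finsupp.single (⟨i.1, Fin.cast (congrArg n (hx1 i)) (x i).2⟩ : Σ j, Fin (n j)) 1) = mm := by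
    ext y
    rw [Finsupp.finset_sum_apply]
    by_cases hy : y.1 ∈ S
    · have hmem : (⟨y.1, hy⟩ : {z // z ∈ S}) ∈ S.attach := Finset.mem_attach _ _
      rw [Finset.sum_eq_single (⟨y.1, hy⟩ : {z // z ∈ S})]
      · rw [hxe ⟨y.1, hy⟩, Finsupp.single_apply]
        by_cases hxy : x ⟨y.1, hy⟩ = y
        · rw [if_pos hxy, ← hxy, hx2 ⟨y.1, hy⟩]
        · rw [if_neg hxy]
          exact (hx3 ⟨y.1, hy⟩ y rfl (fun hh => hxy (hh ▸ rfl))).symm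
      · intro b _ hb
        rw [hxe b, Finsupp.single_apply, if_neg]
        intro hcontra
        apply hb
        apply Subtype.ext
        rw [← hx1 b, hcontra]
      · intro hc; exact absurd hmem hc
    · have hz : mm y = 0 := by
        apply mdeg_zero_eq (Sigma.fst : (Σ j, Fin (n j)) → Fin d) (i := y.1) ?_ y rfl
        have h := hmm y.1
        rw [if_neg hy] at h
        exact h
      rw [hz]
      apply Finset.sum_eq_zero
      intro b _
      rw [hxe b, Finsupp.single_apply, if_neg]
      intro hcontra
      apply hy
      rw [← hcontra] at hy ⊢
      rw [hx1 b]
      exact b.2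
  rw [hsum]

set_option maxHeartbeats 1000000 in
lemma span_range_bound (S : Finset (Fin d)) :
    Module.finrank K (Submodule.span K (Set.range (Fmap K n S))) ≤ ∏ i ∈ S, n i := by
  classical
  have h1 : Set.range (Fmap K n S) = ↑(Finset.univ.image (Fmap K n S)) := by
    rw [Finset.coe_image, Finset.coe_univ, Set.image_univ]
  rw [h1]
  have h2 := finrank_span_finset_le_card (R := K) (Finset.univ.image (Fmap K n S))
  rw [Set.finrank] at h2
  have h3 : (Finset.univ.image (Fmap K n S)).card ≤
      (Finset.univ : Finset (∀ i : {x // x ∈ S}, Fin (n i))).card := Finset.card_image_le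
  have h4 : (Finset.univ : Finset (∀ i : {x // x ∈ S}, Fin (n i))).card = ∏ i ∈ S, n i := by
    rw [Finset.card_univ, Fintype.card_pi]
    simp only [Fintype.card_fin]
    exact Finset.prod_coe_sort S n
  omega

end C

section D
variable {K : Type*} [Field K] {d : ℕ} {n : Fin d → ℕ}

lemma component_ones_eq_bot {i : Fin d} (hni : n i = 0) :
    componentSub K (Sigma.fst : (Σ j, Fin (n j)) → Fin d) (fun _ => 1) = ⊥ := by
  rw [componentSub]
  convert Submodule.span_empty
  rw [Set.eq_empty_iff_forall_notMem]
  rintro p ⟨mm, hmm, rfl⟩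
  have h0 : mdeg (Sigma.fst : (Σ j, Fin (n j)) → Fin d) mm i = 0 := by
    show ∑ x ∈ mm.support, (if Sigma.fst x = i then mm x else 0) = 0
    apply Finset.sum_eq_zero
    intro x _
    rw [if_neg]
    intro hc
    have hlt := x.2.isLt
    have hz : n x.fst = 0 := by rw [hc, hni]
    omega
  have h1 := hmm i
  rw [h0] at h1
  exact absurd h1.symm one_ne_zero

lemma Hdim_le (f : MvPolynomial (Σ j, Fin (n j)) K)
    (hf : f ∈ componentSub K (Sigma.fst : (Σ j, Fin (n j)) → Fin d) (fun _ => 1))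
    (S : Finset (Fin d)) :
    Hdim (Sigma.fst : (Σ j, Fin (n j)) → Fin d) f S ≤ ∏ i ∈ Sᶜ, n i := by
  classical
  have hle : (componentSub K (Sigma.fst : (Σ j, Fin (n j)) → Fin d)
      (fun i => if i ∈ S then 1 else 0)).map (applyTo f) ≤
      Submodule.span K (Set.range (Fmap K n Sᶜ)) := by
    refine le_trans (comp_map_le _ hf) (le_trans (le_of_eq ?_) (component_le_span Sᶜ))
    congr 1
    funext i
    by_cases h : i ∈ S <;> simp [h, Finset.mem_compl]
  haveI := FiniteDimensional.span_of_finite K (Set.finite_range (Fmap K n Sᶜ))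
  exact le_trans (Submodule.finrank_mono hle) (span_range_bound Sᶜ)

end D

/-- If `d = 2m` is even and `f` is a balanced neighborly polynomial of type
`(n₁,…,n_d)` with `n₁ ≥ n₂ ≥ ⋯ ≥ n_d`, then `n₁ = n₂ = ⋯ = n_d`. -/
theorem stmt13 (K : Type*) [Field K] (m : ℕ) (hm : 0 < m) (n : Fin (2 * m) → ℕ)
    (hmono : ∀ i j : Fin (2 * m), i ≤ j → n j ≤ n i)
    (f : MvPolynomial (Σ i : Fin (2 * m), Fin (n i)) K) (hf0 : f ≠ 0)
    (hf : f ∈ componentSub K (Sigma.fst : (Σ i : Fin (2 * m), Fin (n i)) → Fin (2 * m))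
            (fun _ => 1))
    (hneigh : ∀ S : Finset (Fin (2 * m)), S.card ≤ m →
        Hdim Sigma.fst f S = ∏ i ∈ S, n i) :
    ∀ i j : Fin (2 * m), n i = n j := by
  classical
  have hval : ∀ p q : Fin (2*m), p.val = q.val → n p = n q :=
    fun p q h => congrArg n (Fin.ext h)
  have hpos : ∀ i, 0 < n i := by
    intro i
    rcases Nat.eq_zero_or_pos (n i) with h | h
    · exfalso
      apply hf0
      rw [component_ones_eq_bot h] at hf
      exact (Submodule.mem_bot K).1 hf
    · exact h
  have key : ∀ S : Finset (Fin (2*m)), S.card = m → ∏ i ∈ S, n i = ∏ i ∈ Sᶜ, n i := by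
    intro S hS
    have l1 : ∏ i ∈ S, n i ≤ ∏ i ∈ Sᶜ, n i := by
      rw [← hneigh S hS.le]; exact Hdim_le f hf S
    have l2 : ∏ i ∈ Sᶜ, n i ≤ ∏ i ∈ S, n i := by
      have hc : Sᶜ.card ≤ m := by
        rw [Finset.card_compl, hS, Fintype.card_fin]; omega
      have h2 := Hdim_le f hf Sᶜ
      rw [compl_compl] at h2
      rw [← hneigh Sᶜ hc]
      exact h2
    omega
  have ha : m < 2 * m := by omega
  have h2m1 : 2 * m - 1 < 2 * m := by omega
  have h02m : 0 < 2 * m := by omega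
  have hIc : ∀ i : Fin (2 * m), i ∈ (Finset.Iio (⟨m, ha⟩ : Fin (2 * m)))ᶜ ↔ m ≤ i.val := by
    intro i
    rw [Finset.mem_compl, Finset.mem_Iio, not_lt, Fin.le_def]
  have heq := key (Finset.Iio ⟨m, ha⟩) (by rw [Fin.card_Iio])
  have h0l : n ⟨0, h02m⟩ = n ⟨2 * m - 1, h2m1⟩ := by
    by_contra hne
    have hlt : n ⟨2 * m - 1, h2m1⟩ < n ⟨0, h02m⟩ :=
      lt_of_le_of_ne (hmono ⟨0, h02m⟩ ⟨2 * m - 1, h2m1⟩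
        (Fin.le_def.mpr (show (0:ℕ) ≤ 2 * m - 1 from Nat.zero_le _))) (Ne.symm hne)
    have hge : ∀ i ∈ (Finset.Iio (⟨m, ha⟩ : Fin (2 * m)))ᶜ,
        n i ≤ n ⟨i.val - m, lt_of_le_of_lt (Nat.sub_le _ _) i.isLt⟩ :=
      fun i _ => hmono _ i (Fin.le_def.mpr (Nat.sub_le _ _))
    have hstrict : ∃ i ∈ (Finset.Iio (⟨m, ha⟩ : Fin (2 * m)))ᶜ,
        n i < n ⟨i.val - m, lt_of_le_of_lt (Nat.sub_le _ _) i.isLt⟩ := by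
      by_contra hall
      push_neg at hall
      have e1 : n ⟨m - m, by omega⟩ ≤ n ⟨m, ha⟩ :=
        hall ⟨m, ha⟩ ((hIc _).2 (le_refl m))
      have e1' : n ⟨0, h02m⟩ ≤ n ⟨m, ha⟩ :=
        le_trans (le_of_eq (hval ⟨0, h02m⟩ ⟨m - m, by omega⟩ (show 0 = m - m by omega))) e1
      have e2 : n ⟨2 * m - 1 - m, by omega⟩ ≤ n ⟨2 * m - 1, h2m1⟩ :=
        hall ⟨2 * m - 1, h2m1⟩ ((hIc _).2 (show m ≤ 2 * m - 1 by omega))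
      have e2' : n ⟨m - 1, by omega⟩ ≤ n ⟨2 * m - 1, h2m1⟩ :=
        le_trans (le_of_eq (hval ⟨m - 1, by omega⟩ ⟨2 * m - 1 - m, by omega⟩
          (show m - 1 = 2 * m - 1 - m by omega))) e2
      have e3 : n ⟨m, ha⟩ ≤ n ⟨m - 1, by omega⟩ :=
        hmono ⟨m - 1, by omega⟩ ⟨m, ha⟩ (Fin.le_def.mpr (show m - 1 ≤ m from Nat.sub_le _ _))
      exact absurd (le_trans e1' (le_trans e3 e2')) (not_le.2 hlt)
    have hmain := Finset.prod_lt_prod (f := n)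
      (g := fun i => n ⟨i.val - m, lt_of_le_of_lt (Nat.sub_le _ _) i.isLt⟩)
      (fun i _ => hpos i) hge hstrict
    have hprodeq : ∏ i ∈ (Finset.Iio (⟨m, ha⟩ : Fin (2 * m)))ᶜ,
        n ⟨i.val - m, lt_of_le_of_lt (Nat.sub_le _ _) i.isLt⟩ =
        ∏ i ∈ Finset.Iio (⟨m, ha⟩ : Fin (2 * m)), n i := by
      refine Finset.prod_nbij' (fun i => ⟨i.val - m, lt_of_le_of_lt (Nat.sub_le _ _) i.isLt⟩)
        (fun j => if h : j.val + m < 2 * m then ⟨j.val + m, h⟩ else j) ?_ ?_ ?_ ?_ ?_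
      · intro i hi
        rw [hIc i] at hi
        rw [Finset.mem_Iio, Fin.lt_def]
        show i.val - m < m
        have := i.isLt
        omega
      · intro j hj
        rw [Finset.mem_Iio, Fin.lt_def] at hj
        have hjm : j.val < m := hj
        rw [dif_pos (show j.val + m < 2 * m by omega)]
        exact (hIc _).2 (show m ≤ j.val + m by omega)
      · intro i hi
        rw [hIc i] at hi
        dsimp only
        rw [dif_pos (show i.val - m + m < 2 * m by have := i.isLt; omega)]
        exact Fin.ext (show i.val - m + m = i.val by omega)
      · intro j hj
        rw [Finset.mem_Iio, Fin.lt_def] at hj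
        have hjm : j.val < m := hj
        rw [dif_pos (show j.val + m < 2 * m by omega)]
        exact Fin.ext (show j.val + m - m = j.val by omega)
      · intro i _
        rfl
    have hmain' : ∏ i ∈ (Finset.Iio (⟨m, ha⟩ : Fin (2 * m)))ᶜ, n i <
        ∏ i ∈ (Finset.Iio (⟨m, ha⟩ : Fin (2 * m)))ᶜ,
          n ⟨i.val - m, lt_of_le_of_lt (Nat.sub_le _ _) i.isLt⟩ := hmain
    rw [hprodeq, ← heq] at hmain'
    exact lt_irrefl _ hmain'
  intro i j
  have hub : ∀ k : Fin (2 * m), n k = n ⟨0, h02m⟩ := by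
    intro k
    refine le_antisymm (hmono ⟨0, h02m⟩ k (Fin.le_def.mpr (Nat.zero_le _))) ?_
    rw [h0l]
    refine hmono k ⟨2 * m - 1, h2m1⟩ (Fin.le_def.mpr ?_)
    show k.val ≤ 2 * m - 1
    have := k.isLt
    omega
  rw [hub i, hub j]
end
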